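/- Let S and A be standard Borel measurable spaces, p : S → A → ProbabilityMeasure S a measurable Markov kernel, r : S × A → ℝ a bounded measurable reward, γ ∈ [0,1), and d ≥ 1 an integer delay. Let π_E : S → ProbabilityMeasure A be a measurable (undelayed) policy and π̃ : X → ProbabilityMeasure A a measurable delayed policy on the augmented space X = S × A^d. Define: the undelayed value V(s) = Σ_{t≥0} γ^t E[r(s_t, a_t)] where s₀ = s, a_t ~ π_E(s_t), s_{t+1} ~ p(s_t, a_t) (each expectation taken under the iterated kernel law, the series converging absolutely since r is bounded); the undelayed action value Q(s,a) = r(s,a) + γ ∫ V(s') d p(s,a)(s'); for x = (s₁, a₁, …, a_d) the belief b(x) as the iterated bind of δ_{s₁} through p(·, a₁), …, p(·, a_d); the augmented kernel p̃(x,a) as the pushforward of p(s₁,a₁) under s₂ ↦ (s₂, a₂, …, a_d, a); the delayed reward r̃(x,a) = ∫ r(s,a) d b(x)(s); the delayed value Ṽ(x) = Σ_{t≥0} γ^t E[r̃(x_t, a_t)] where x₀ = x, a_t ~ π̃(x_t), x_{t+1} ~ p̃(x_t, a_t); and the discounted visitation measure d^{π̃}_x = (1−γ) Σ_{t≥0}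 γ^t · law(x_t). Then for every x ∈ X: ∫ V(s) d b(x)(s) − Ṽ(x) = (1/(1−γ)) · ∫_X [ ∫ V(s) d b(x')(s) − ∫_S ∫_A Q(s,a) d π̃(x')(a) d b(x')(s) ] d d^{π̃}_x(x'). -/

import Mathlib

open MeasureTheory

/-- The belief over the current state given a last observed state `s₁` and a queue of actions
`as = [a₁, …, a_d]`: the iterated bind of `δ_{s₁}` through the kernel `p`. -/
noncomputable def belief {S A : Type*} [MeasurableSpace S]
    (p : S → A → Measure S) (s₁ : S) (as : List A) : Measure S :=
  as.foldl (fun b a => b.bind fun s => p s a) (Measure.dirac s₁)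

/-- The belief of an augmented state `x = (s₁, a₁, …, a_d)`. -/
noncomputable def beliefX {S A : Type*} [MeasurableSpace S] {d : ℕ}
    (p : S → A → Measure S) (x : S × (Fin d → A)) : Measure S :=
  belief p x.1 (List.ofFn x.2)

/-- Shift an action queue, dropping the oldest action and appending the new one. -/
def shiftQueue {A : Type*} {d : ℕ} (q : Fin d → A) (a : A) : Fin d → A :=
  fun i => if h : (i : ℕ) + 1 < d then q ⟨(i : ℕ) + 1, h⟩ else a

/-- The augmented transition kernel `p̃((s₁,a₁,…,a_d), a)`: the pushforward of `p(s₁, a₁)`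
under `s₂ ↦ (s₂, a₂, …, a_d, a)`. -/
noncomputable def augKernel {S A : Type*} [MeasurableSpace S] [MeasurableSpace A] {d : ℕ}
    (p : S → A → Measure S) (x : S × (Fin d → A)) (a : A) : Measure (S × (Fin d → A)) :=
  if h : 0 < d then (p x.1 (x.2 ⟨0, h⟩)).map (fun s₂ => (s₂, shiftQueue x.2 a))
  else Measure.dirac x

/-- The delayed reward `r̃(x, a) = ∫ r(s, a) d b(x)(s)`. -/
noncomputable def delayedReward {S A : Type*} [MeasurableSpace S] {d : ℕ}
    (p : S → A → Measure S) (r : S → A → ℝ) (x : S × (Fin d → A)) (a : A) : ℝ :=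
  ∫ s, r s a ∂(beliefX p x)

/-- The law of the state after `t` steps, starting from `init`, following policy `π` and
kernel `K`. -/
noncomputable def stateDist {Z A : Type*} [MeasurableSpace Z] [MeasurableSpace A]
    (K : Z → A → Measure Z) (π : Z → Measure A) (init : Measure Z) : ℕ → Measure Z
  | 0 => init
  | t + 1 => (stateDist K π init t).bind fun z => (π z).bind fun a => K z a

/-- The value function: the discounted sum of expected rewards of policy `π` in the MDP with
kernel `K` and reward `r`, started from `z`. -/
noncomputable def value {Z A : Type*} [MeasurableSpace Z] [MeasurableSpace A]
    (K : Z → A → Measure Z) (π : Z → Measure A) (r : Z → A → ℝ) (γ : ℝ) (z : Z) : ℝ :=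
  ∑' t : ℕ, γ ^ t * ∫ z', ∫ a, r z' a ∂(π z') ∂(stateDist K π (Measure.dirac z) t)

/-- The state-action value function `Q(s,a) = r(s,a) + γ ∫ V(s') dp(s,a)(s')`. -/
noncomputable def qValue {Z A : Type*} [MeasurableSpace Z] [MeasurableSpace A]
    (K : Z → A → Measure Z) (π : Z → Measure A) (r : Z → A → ℝ) (γ : ℝ) (z : Z) (a : A) : ℝ :=
  r z a + γ * ∫ z', value K π r γ z' ∂(K z a)

/-- The discounted visitation measure `(1−γ) Σ_t γ^t law(z_t)` of the process started at `z`. -/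
noncomputable def visitation {Z A : Type*} [MeasurableSpace Z] [MeasurableSpace A]
    (K : Z → A → Measure Z) (π : Z → Measure A) (γ : ℝ) (z : Z) : Measure Z :=
  ENNReal.ofReal (1 - γ) •
    Measure.sum fun t : ℕ => ENNReal.ofReal (γ ^ t) • stateDist K π (Measure.dirac z) t


open scoped ENNReal

namespace PDL

open ProbabilityTheory

theorem isProbabilityMeasure_bind {α β : Type*} [MeasurableSpace α] [MeasurableSpace β]
    {μ : Measure α} [IsProbabilityMeasure μ]
    {κ : α → Measure β} (hκ : Measurable κ) (hκp : ∀ a, IsProbabilityMeasure (κ a)) :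
    IsProbabilityMeasure (μ.bind κ) := by
  constructor
  rw [Measure.bind_apply MeasurableSet.univ hκ.aemeasurable]
  simp only [show ∀ a, κ a Set.univ = 1 from fun a => (hκp a).measure_univ, lintegral_one,
    measure_univ]

theorem measurable_bind_param {α β γ : Type*} [MeasurableSpace α] [MeasurableSpace β]
    [MeasurableSpace γ] {m : α → Measure β} (hm : Measurable m)
    (hmp : ∀ a, IsProbabilityMeasure (m a)) {κ : α → β → Measure γ}
    (hκ : Measurable fun q : α × β => κ q.1 q.2) :
    Measurable fun a => (m a).bind (κ a) := by
  apply Measure.measurable_of_measurable_coe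
  intro s hs
  have h1 : ∀ a, (m a).bind (κ a) s = ∫⁻ b, κ a b s ∂(m a) := fun a =>
    Measure.bind_apply hs (hκ.comp (measurable_const.prodMk measurable_id)).aemeasurable
  simp_rw [h1]
  haveI : IsMarkovKernel (Kernel.mk m hm) := ⟨hmp⟩
  exact Measurable.lintegral_kernel_prod_right (κ := Kernel.mk m hm)
    ((Measure.measurable_coe hs).comp hκ)

theorem measurable_integral_param {α β : Type*} [MeasurableSpace α] [MeasurableSpace β]
    {m : α → Measure β} (hm : Measurable m)
    (hmp : ∀ a, IsProbabilityMeasure (m a)) {f : α → β → ℝ}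
    (hf : Measurable fun q : α × β => f q.1 q.2) :
    Measurable fun a => ∫ b, f a b ∂(m a) := by
  haveI : IsMarkovKernel (Kernel.mk m hm) := ⟨hmp⟩
  exact (MeasureTheory.StronglyMeasurable.integral_kernel_prod_right
    (κ := Kernel.mk m hm) (hf.stronglyMeasurable)).measurable

theorem integrable_of_bdd {β : Type*} [MeasurableSpace β] {μ : Measure β} [IsFiniteMeasure μ]
    {g : β → ℝ} (hg : AEStronglyMeasurable g μ) {M : ℝ} (h : ∀ b, |g b| ≤ M) : Integrable g μ :=
  ⟨hg, HasFiniteIntegral.of_bounded (C := M) (ae_of_all _ (by simpa [Real.norm_eq_abs] using h))⟩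

theorem abs_integral_le {β : Type*} [MeasurableSpace β] {μ : Measure β}
    [IsProbabilityMeasure μ] {g : β → ℝ}
    {M : ℝ} (h : ∀ b, |g b| ≤ M) : |∫ b, g b ∂μ| ≤ M := by
  have := norm_integral_le_of_norm_le_const (μ := μ) (f := g) (C := M)
    (ae_of_all _ (by simpa [Real.norm_eq_abs] using h))
  simpa [Real.norm_eq_abs, measure_univ] using this

theorem integral_bind {β γ : Type*} [MeasurableSpace β] [MeasurableSpace γ]
    {μ : Measure β} [IsProbabilityMeasure μ]
    {κ : β → Measure γ} (hκ : Measurable κ) (hκp : ∀ b, IsProbabilityMeasure (κ b))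
    {g : γ → ℝ} (hg : Measurable g) {M : ℝ} (hbd : ∀ c, |g c| ≤ M) :
    ∫ c, g c ∂(μ.bind κ) = ∫ b, ∫ c, g c ∂(κ b) ∂μ := by
  haveI hbp : IsProbabilityMeasure (μ.bind κ) := PDL.isProbabilityMeasure_bind hκ hκp
  set h : γ → ℝ := fun c => g c + M with hh
  have h0 : ∀ c, 0 ≤ h c := fun c => by
    have := (abs_le.mp (hbd c)).1; simp only [hh]; linarith
  have hb : ∀ c, |h c| ≤ M + M := fun c => by
    have h1 := (abs_le.mp (hbd c)).1; have h2 := (abs_le.mp (hbd c)).2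
    rw [abs_le]; constructor <;> simp only [hh] <;> linarith
  have hm : Measurable h := hg.add_const M
  have hml : Measurable fun c => ENNReal.ofReal (h c) := hm.ennreal_ofReal
  have hle : ∀ (ν : Measure γ) [IsProbabilityMeasure ν],
      ∫⁻ c, ENNReal.ofReal (h c) ∂ν ≤ ENNReal.ofReal (M + M) := by
    intro ν hν
    calc ∫⁻ c, ENNReal.ofReal (h c) ∂ν ≤ ∫⁻ _, ENNReal.ofReal (M + M) ∂ν :=
          lintegral_mono fun c => ENNReal.ofReal_le_ofReal ((le_abs_self _).trans (hb c))
      _ = ENNReal.ofReal (M + M) := by simp [measure_univ]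
  have heq : ∀ (ν : Measure γ) [IsProbabilityMeasure ν],
      ∫ c, h c ∂ν = (∫⁻ c, ENNReal.ofReal (h c) ∂ν).toReal := fun ν hν =>
    integral_eq_lintegral_of_nonneg_ae (ae_of_all _ h0) hm.aestronglyMeasurable
  have hfin : ∀ b, ∫⁻ c, ENNReal.ofReal (h c) ∂(κ b) < ∞ := fun b =>
    lt_of_le_of_lt (hle (κ b)) ENNReal.ofReal_lt_top
  have keyh : ∫ c, h c ∂(μ.bind κ) = ∫ b, ∫ c, h c ∂(κ b) ∂μ := by
    rw [heq _, Measure.lintegral_bind hκ.aemeasurable hml.aemeasurable]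
    have h2 : ∫ b, (∫⁻ c, ENNReal.ofReal (h c) ∂(κ b)).toReal ∂μ
        = (∫⁻ b, ∫⁻ c, ENNReal.ofReal (h c) ∂(κ b) ∂μ).toReal :=
      integral_toReal ((Measure.measurable_lintegral hml).comp hκ).aemeasurable
        (ae_of_all _ hfin)
    rw [← h2]
    exact integral_congr_ae (ae_of_all _ fun b => (heq (κ b)).symm)
  have hsplit : ∀ (ν : Measure γ) [IsProbabilityMeasure ν],
      ∫ c, h c ∂ν = (∫ c, g c ∂ν) + M := by
    intro ν hν
    rw [hh]
    rw [integral_add (PDL.integrable_of_bdd hg.aestronglyMeasurable hbd) (integrable_const M)]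
    simp [measure_univ]
  rw [hsplit] at keyh
  have hco : ∫ b, ∫ c, h c ∂(κ b) ∂μ = ∫ b, ((∫ c, g c ∂(κ b)) + M) ∂μ :=
    integral_congr_ae (ae_of_all _ fun b => hsplit (κ b))
  rw [hco] at keyh
  have hintg : Integrable (fun b => ∫ c, g c ∂(κ b)) μ := by
    refine PDL.integrable_of_bdd ?_ (M := M) fun b => ?_
    · exact (PDL.measurable_integral_param hκ hκp (f := fun _ c => g c)
        (hg.comp measurable_snd)).aestronglyMeasurable
    · haveI := hκp b
      have hx := norm_integral_le_of_norm_le_const (μ := κ b) (f := g) (C := M)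
        (ae_of_all _ (by simpa [Real.norm_eq_abs] using hbd))
      simpa [Real.norm_eq_abs, measure_univ] using hx
  rw [integral_add hintg (integrable_const M)] at keyh
  simp only [integral_const, measure_univ, ENNReal.toReal_one, probReal_univ, one_smul, smul_eq_mul, one_mul] at keyh
  linarith

section Fold
variable {S A : Type*} [MeasurableSpace S] [MeasurableSpace A]
  (p : S → A → Measure S)

/-- fold a measure through a list of actions -/
noncomputable def pfold (μ : Measure S) (l : List A) : Measure S :=
  l.foldl (fun b a => b.bind fun s => p s a) μ

theorem pfold_nil (μ : Measure S) : pfold p μ ([] : List A) = μ := rfl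

theorem pfold_cons (μ : Measure S) (a : A) (l : List A) :
    pfold p μ (a :: l) = pfold p (μ.bind fun s => p s a) l := rfl

theorem pfold_append (μ : Measure S) (l : List A) (a : A) :
    pfold p μ (l ++ [a]) = (pfold p μ l).bind fun s => p s a := by
  simp [pfold, List.foldl_append]

theorem pfold_param (hp_prob : ∀ s a, IsProbabilityMeasure (p s a))
    (hp_meas : Measurable fun q : S × A => p q.1 q.2)
    {X : Type*} [MeasurableSpace X] (l : List (X → A))
    (hl : ∀ f ∈ l, Measurable f) {m : X → Measure S} (hm : Measurable m)
    (hmp : ∀ x, IsProbabilityMeasure (m x)) :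
    Measurable (fun x => pfold p (m x) (l.map (· x)))
      ∧ ∀ x, IsProbabilityMeasure (pfold p (m x) (l.map (· x))) := by
  induction l generalizing m with
  | nil => exact ⟨hm, hmp⟩
  | cons f l ih =>
    have hf : Measurable f := hl f List.mem_cons_self
    have hl' : ∀ g ∈ l, Measurable g := fun g hg => hl g (List.mem_cons_of_mem _ hg)
    have hm' : Measurable fun x => (m x).bind fun s => p s (f x) :=
      measurable_bind_param hm hmp
        (κ := fun x s => p s (f x))
        (hp_meas.comp (measurable_snd.prodMk (hf.comp measurable_fst)))
    have hmp' : ∀ x, IsProbabilityMeasure ((m x).bind fun s => p s (f x)) := fun x => by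
      haveI := hmp x
      exact isProbabilityMeasure_bind
        (hp_meas.comp (measurable_id.prodMk measurable_const)) (fun s => hp_prob s (f x))
    simpa only [List.map_cons, pfold_cons] using ih hl' hm' hmp'

theorem measurable_pfold_dirac (hp_prob : ∀ s a, IsProbabilityMeasure (p s a))
    (hp_meas : Measurable fun q : S × A => p q.1 q.2) (l : List A) :
    Measurable (fun s : S => pfold p (Measure.dirac s) l) := by
  have h := (pfold_param p hp_prob hp_meas (X := S) (l.map fun a => (fun _ : S => a))
    (by intro f hf; simp only [List.mem_map] at hf; obtain ⟨a, _, rfl⟩ := hf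
        exact measurable_const)
    (m := fun s => Measure.dirac s) Measure.measurable_dirac (fun s => by infer_instance)).1
  have key : ∀ s : S, ((l.map fun a => (fun _ : S => a)).map (· s)) = l := by
    intro s; rw [List.map_map]; exact List.map_id l
  simpa only [key] using h

theorem isProbabilityMeasure_pfold (hp_prob : ∀ s a, IsProbabilityMeasure (p s a))
    (hp_meas : Measurable fun q : S × A => p q.1 q.2) (l : List A) (μ : Measure S)
    [IsProbabilityMeasure μ] : IsProbabilityMeasure (pfold p μ l) := by
  induction l generalizing μ with
  | nil => simpa [pfold_nil] using ‹IsProbabilityMeasure μ›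
  | cons a l ih =>
    rw [pfold_cons]
    haveI : IsProbabilityMeasure (μ.bind fun s => p s a) :=
      isProbabilityMeasure_bind (hp_meas.comp (measurable_id.prodMk measurable_const))
        (fun s => hp_prob s a)
    exact ih _

theorem pfold_eq_bind (hp_prob : ∀ s a, IsProbabilityMeasure (p s a))
    (hp_meas : Measurable fun q : S × A => p q.1 q.2) (l : List A) (μ : Measure S) :
    pfold p μ l = μ.bind fun s => pfold p (Measure.dirac s) l := by
  induction l generalizing μ with
  | nil => simpa [pfold_nil] using Measure.bind_dirac.symm
  | cons a l ih =>
    have hpa : Measurable fun s => p s a :=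
      hp_meas.comp (measurable_id.prodMk measurable_const)
    have hd : Measurable fun s : S => pfold p (Measure.dirac s) l :=
      measurable_pfold_dirac p hp_prob hp_meas l
    rw [pfold_cons, ih, Measure.bind_bind hpa.aemeasurable hd.aemeasurable]
    congr 1
    funext s
    rw [pfold_cons, Measure.dirac_bind hpa, ih]

theorem measurable_beliefX (hp_prob : ∀ s a, IsProbabilityMeasure (p s a))
    (hp_meas : Measurable fun q : S × A => p q.1 q.2) {d : ℕ} :
    Measurable (fun x : S × (Fin d → A) => beliefX p x) := by
  have h := (pfold_param p hp_prob hp_meas (X := S × (Fin d → A))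
    (List.ofFn fun i => (fun x : S × (Fin d → A) => x.2 i))
    (by intro f hf; rw [List.mem_ofFn] at hf; obtain ⟨i, rfl⟩ := hf
        exact (measurable_pi_apply i).comp measurable_snd)
    (m := fun x => Measure.dirac x.1) (Measure.measurable_dirac.comp measurable_fst)
    (fun x => by infer_instance)).1
  have key : ∀ x : S × (Fin d → A),
      ((List.ofFn fun i => (fun x : S × (Fin d → A) => x.2 i)).map (· x)) = List.ofFn x.2 := by
    intro x; rw [List.map_ofFn]; rfl
  have h' : Measurable fun x : S × (Fin d → A) => pfold p (Measure.dirac x.1) (List.ofFn x.2) := by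
    simpa only [key] using h
  exact h'

theorem isProbabilityMeasure_beliefX (hp_prob : ∀ s a, IsProbabilityMeasure (p s a))
    (hp_meas : Measurable fun q : S × A => p q.1 q.2) {d : ℕ} (x : S × (Fin d → A)) :
    IsProbabilityMeasure (beliefX p x) :=
  isProbabilityMeasure_pfold p hp_prob hp_meas _ _

end Fold

theorem ofFn_shiftQueue {A : Type*} {d : ℕ} (q : Fin (d + 1) → A) (a : A) :
    List.ofFn (shiftQueue q a) = (List.ofFn fun i : Fin d => q i.succ) ++ [a] := by
  apply List.ext_getElem
  · simp
  · intro i h1 h2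
    simp only [List.length_ofFn] at h1
    rcases lt_or_ge i d with hi | hi
    · rw [List.getElem_append_left (by simpa using hi)]
      simp only [List.getElem_ofFn, shiftQueue]
      rw [dif_pos (by omega)]
      congr 1
    · have hid : i = d := by omega
      subst hid
      rw [List.getElem_append_right (by simp), List.getElem_ofFn]
      simp [shiftQueue]

section Value
variable {Z A : Type*} [MeasurableSpace Z] [MeasurableSpace A]
  (K : Z → A → Measure Z) (π : Z → Measure A)

theorem measurable_step (hK_prob : ∀ z a, IsProbabilityMeasure (K z a))
    (hK_meas : Measurable fun q : Z × A => K q.1 q.2)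
    (hπ_prob : ∀ z, IsProbabilityMeasure (π z)) (hπ_meas : Measurable π) :
    Measurable fun z => (π z).bind fun a => K z a :=
  measurable_bind_param hπ_meas hπ_prob hK_meas

theorem isProbabilityMeasure_step (hK_prob : ∀ z a, IsProbabilityMeasure (K z a))
    (hK_meas : Measurable fun q : Z × A => K q.1 q.2)
    (hπ_prob : ∀ z, IsProbabilityMeasure (π z)) (hπ_meas : Measurable π) (z : Z) :
    IsProbabilityMeasure ((π z).bind fun a => K z a) := by
  haveI := hπ_prob z
  exact isProbabilityMeasure_bind (hK_meas.comp (measurable_const.prodMk measurable_id))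
    (hK_prob z)

theorem isProbabilityMeasure_stateDist (hK_prob : ∀ z a, IsProbabilityMeasure (K z a))
    (hK_meas : Measurable fun q : Z × A => K q.1 q.2)
    (hπ_prob : ∀ z, IsProbabilityMeasure (π z)) (hπ_meas : Measurable π)
    (init : Measure Z) [IsProbabilityMeasure init] (t : ℕ) :
    IsProbabilityMeasure (stateDist K π init t) := by
  induction t with
  | zero => simpa [stateDist] using ‹IsProbabilityMeasure init›
  | succ t ih =>
    show IsProbabilityMeasure ((stateDist K π init t).bind _)
    haveI := ih
    exact isProbabilityMeasure_bind (measurable_step K π hK_prob hK_meas hπ_prob hπ_meas)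
      (isProbabilityMeasure_step K π hK_prob hK_meas hπ_prob hπ_meas)

theorem measurable_stateDist (hK_prob : ∀ z a, IsProbabilityMeasure (K z a))
    (hK_meas : Measurable fun q : Z × A => K q.1 q.2)
    (hπ_prob : ∀ z, IsProbabilityMeasure (π z)) (hπ_meas : Measurable π) (t : ℕ) :
    Measurable fun z => stateDist K π (Measure.dirac z) t := by
  induction t with
  | zero => exact Measure.measurable_dirac
  | succ t ih =>
    exact (Measure.measurable_bind'
      (measurable_step K π hK_prob hK_meas hπ_prob hπ_meas)).comp ih

variable (r : Z → A → ℝ) (γ : ℝ)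

theorem abs_reward_term_le (hπ_prob : ∀ z, IsProbabilityMeasure (π z))
    {M : ℝ} (hM0 : 0 ≤ M) (hr : ∀ z a, |r z a| ≤ M) (ν : Measure Z)
    [IsProbabilityMeasure ν] :
    |∫ z', ∫ a, r z' a ∂(π z') ∂ν| ≤ M := by
  refine abs_integral_le fun z' => ?_
  haveI := hπ_prob z'
  exact abs_integral_le fun a => hr z' a

theorem summable_value_series (hK_prob : ∀ z a, IsProbabilityMeasure (K z a))
    (hK_meas : Measurable fun q : Z × A => K q.1 q.2)
    (hπ_prob : ∀ z, IsProbabilityMeasure (π z)) (hπ_meas : Measurable π)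
    {M : ℝ} (hM0 : 0 ≤ M) (hr : ∀ z a, |r z a| ≤ M)
    (hγ0 : 0 ≤ γ) (hγ1 : γ < 1) (z : Z) :
    Summable fun t : ℕ =>
      γ ^ t * ∫ z', ∫ a, r z' a ∂(π z') ∂(stateDist K π (Measure.dirac z) t) := by
  refine Summable.of_norm_bounded
    ((summable_geometric_of_lt_one hγ0 hγ1).mul_left M) fun t => ?_
  haveI := isProbabilityMeasure_stateDist K π hK_prob hK_meas hπ_prob hπ_meas
    (Measure.dirac z) t
  rw [Real.norm_eq_abs, abs_mul, abs_pow, abs_of_nonneg hγ0, mul_comm]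
  exact mul_le_mul_of_nonneg_right
    (abs_reward_term_le π r hπ_prob hM0 hr _) (pow_nonneg hγ0 t)

theorem abs_value_le (hK_prob : ∀ z a, IsProbabilityMeasure (K z a))
    (hK_meas : Measurable fun q : Z × A => K q.1 q.2)
    (hπ_prob : ∀ z, IsProbabilityMeasure (π z)) (hπ_meas : Measurable π)
    {M : ℝ} (hM0 : 0 ≤ M) (hr : ∀ z a, |r z a| ≤ M)
    (hγ0 : 0 ≤ γ) (hγ1 : γ < 1) (z : Z) :
    |value K π r γ z| ≤ M * (1 - γ)⁻¹ := by
  have hs : HasSum (fun t : ℕ => M * γ ^ t) (M * (1 - γ)⁻¹) :=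
    (hasSum_geometric_of_lt_one hγ0 hγ1).mul_left M
  rw [← Real.norm_eq_abs]
  refine tsum_of_norm_bounded hs fun t => ?_
  haveI := isProbabilityMeasure_stateDist K π hK_prob hK_meas hπ_prob hπ_meas
    (Measure.dirac z) t
  rw [Real.norm_eq_abs, abs_mul, abs_pow, abs_of_nonneg hγ0, mul_comm]
  exact mul_le_mul_of_nonneg_right
    (abs_reward_term_le π r hπ_prob hM0 hr _) (pow_nonneg hγ0 t)

theorem measurable_value (hK_prob : ∀ z a, IsProbabilityMeasure (K z a))
    (hK_meas : Measurable fun q : Z × A => K q.1 q.2)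
    (hπ_prob : ∀ z, IsProbabilityMeasure (π z)) (hπ_meas : Measurable π)
    (hr_meas : Measurable fun q : Z × A => r q.1 q.2)
    {M : ℝ} (hM0 : 0 ≤ M) (hr : ∀ z a, |r z a| ≤ M)
    (hγ0 : 0 ≤ γ) (hγ1 : γ < 1) :
    Measurable (value K π r γ) := by
  have hterm : ∀ t : ℕ, Measurable fun z =>
      γ ^ t * ∫ z', ∫ a, r z' a ∂(π z') ∂(stateDist K π (Measure.dirac z) t) := by
    intro t
    have hin : Measurable fun z' => ∫ a, r z' a ∂(π z') :=
      measurable_integral_param hπ_meas hπ_prob hr_meas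
    exact measurable_const.mul
      (measurable_integral_param
        (measurable_stateDist K π hK_prob hK_meas hπ_prob hπ_meas t)
        (fun z => isProbabilityMeasure_stateDist K π hK_prob hK_meas hπ_prob hπ_meas _ t)
        (f := fun _ z' => ∫ a, r z' a ∂(π z')) (hin.comp measurable_snd))
  have htend : ∀ z : Z, Filter.Tendsto
      (fun n => ∑ t ∈ Finset.range n,
        γ ^ t * ∫ z', ∫ a, r z' a ∂(π z') ∂(stateDist K π (Measure.dirac z) t))
      Filter.atTop (nhds (value K π r γ z)) := fun z =>
    (summable_value_series K π r γ hK_prob hK_meas hπ_prob hπ_meas hM0 hr hγ0 hγ1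
      z).hasSum.tendsto_sum_nat
  exact measurable_of_tendsto_metrizable
    (fun n => Finset.measurable_sum _ fun t _ => hterm t) (by
      rw [show (value K π r γ) = fun z => value K π r γ z from rfl]
      exact tendsto_pi_nhds.mpr htend)

end Value
end PDL


set_option maxHeartbeats 2000000 in
/-- **Lemma 1 (Delayed Performance Difference Lemma).** For an undelayed policy `π_E` and a
`d`-delayed policy `π̃` (on the augmented space `X = S × A^d`), for every augmented state `x`:
`∫ V dB(x) − Ṽ(x) = (1/(1−γ)) ∫ [∫ V dB(x') − ∫∫ Q dπ̃(x') dB(x')] d d^{π̃}_x(x')`. -/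
theorem delayed_performance_difference {S A : Type*}
    [MeasurableSpace S] [StandardBorelSpace S]
    [MeasurableSpace A] [StandardBorelSpace A]
    (p : S → A → Measure S) (hp_prob : ∀ s a, IsProbabilityMeasure (p s a))
    (hp_meas : Measurable fun q : S × A => p q.1 q.2)
    (r : S → A → ℝ) (hr_meas : Measurable fun q : S × A => r q.1 q.2)
    (Mr : ℝ) (hr_bdd : ∀ s a, |r s a| ≤ Mr)
    (γ : ℝ) (hγ0 : 0 ≤ γ) (hγ1 : γ < 1)
    (d : ℕ) (hd : 1 ≤ d)
    (πE : S → Measure A) (hπE_prob : ∀ s, IsProbabilityMeasure (πE s))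
    (hπE_meas : Measurable πE)
    (πdel : S × (Fin d → A) → Measure A)
    (hπdel_prob : ∀ x, IsProbabilityMeasure (πdel x))
    (hπdel_meas : Measurable πdel) :
    ∀ x : S × (Fin d → A),
      (∫ s, value p πE r γ s ∂(beliefX p x))
          - value (augKernel p) πdel (delayedReward p r) γ x
        = (1 / (1 - γ)) *
            ∫ x' : S × (Fin d → A),
              ((∫ s, value p πE r γ s ∂(beliefX p x'))
                - ∫ s, ∫ a, qValue p πE r γ s a ∂(πdel x') ∂(beliefX p x'))
              ∂(visitation (augKernel p) πdel γ x) := by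
  classical
  obtain ⟨d', rfl⟩ : ∃ d', d = d' + 1 := ⟨d - 1, by omega⟩
  intro x
  have hMr0 : 0 ≤ Mr := le_trans (abs_nonneg _) (hr_bdd x.1 (x.2 0))
  have h1γ : 0 < 1 - γ := by linarith
  set V : S → ℝ := value p πE r γ with hVdef
  set MV : ℝ := Mr * (1 - γ)⁻¹ with hMVdef
  have hMV0 : 0 ≤ MV := mul_nonneg hMr0 (inv_nonneg.mpr h1γ.le)
  have hV_meas : Measurable V :=
    PDL.measurable_value p πE r γ hp_prob hp_meas hπE_prob hπE_meas hr_meas hMr0 hr_bdd hγ0 hγ1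
  have hV_bdd : ∀ s, |V s| ≤ MV := fun s =>
    PDL.abs_value_le p πE r γ hp_prob hp_meas hπE_prob hπE_meas hMr0 hr_bdd hγ0 hγ1 s
  -- beliefs
  have hB_meas : Measurable (beliefX p (d := d' + 1)) := PDL.measurable_beliefX p hp_prob hp_meas
  have hB_prob : ∀ x' : S × (Fin (d' + 1) → A), IsProbabilityMeasure (beliefX p x') :=
    PDL.isProbabilityMeasure_beliefX p hp_prob hp_meas
  obtain ⟨W, hWdef⟩ : ∃ W : (S × (Fin (d' + 1) → A)) → ℝ,
      W = fun x' => ∫ s, V s ∂(beliefX p x') := ⟨_, rfl⟩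
  have hW_meas : Measurable W := by
    rw [hWdef]
    exact PDL.measurable_integral_param hB_meas hB_prob (f := fun _ s => V s)
      (hV_meas.comp measurable_snd)
  have hW_bdd : ∀ x', |W x'| ≤ MV := fun x' => by
    rw [hWdef]
    haveI := hB_prob x'; exact PDL.abs_integral_le hV_bdd
  -- the augmented kernel
  obtain ⟨K, hKdef⟩ : ∃ K : (S × (Fin (d' + 1) → A)) → A → Measure (S × (Fin (d' + 1) → A)),
      K = augKernel p := ⟨_, rfl⟩
  have hK_eq : ∀ (x' : S × (Fin (d' + 1) → A)) (a : A), K x' a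
      = (p x'.1 (x'.2 0)).map (fun s₂ => (s₂, shiftQueue x'.2 a)) := by
    intro x' a
    rw [hKdef]
    unfold augKernel
    rw [dif_pos (Nat.succ_pos d')]
    rfl
  have hshift_meas : Measurable fun w : (Fin (d' + 1) → A) × A => shiftQueue w.1 w.2 := by
    apply measurable_pi_lambda
    intro i
    by_cases h : (i : ℕ) + 1 < d' + 1
    · simp only [shiftQueue, dif_pos h]
      exact (measurable_pi_apply _).comp measurable_fst
    · simp only [shiftQueue, dif_neg h]
      exact measurable_snd
  have hK_prob : ∀ x' a, IsProbabilityMeasure (K x' a) := by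
    intro x' a
    rw [hK_eq]
    haveI := hp_prob x'.1 (x'.2 0)
    exact Measure.isProbabilityMeasure_map (measurable_id.prodMk measurable_const).aemeasurable
  have hK_meas : Measurable fun q : (S × (Fin (d' + 1) → A)) × A => K q.1 q.2 := by
    have hrep : ∀ q : (S × (Fin (d' + 1) → A)) × A, K q.1 q.2
        = (p q.1.1 (q.1.2 0)).bind fun s₂ => Measure.dirac (s₂, shiftQueue q.1.2 q.2) := by
      intro q
      rw [hK_eq]
      exact (Measure.bind_dirac_eq_map (p q.1.1 (q.1.2 0))
        (f := fun s₂ => (s₂, shiftQueue q.1.2 q.2))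
        (measurable_id.prodMk measurable_const)).symm
    simp_rw [hrep]
    refine PDL.measurable_bind_param
      (m := fun q : (S × (Fin (d' + 1) → A)) × A => p q.1.1 (q.1.2 0)) ?_ (fun q => hp_prob _ _)
      (κ := fun q s₂ => Measure.dirac (s₂, shiftQueue q.1.2 q.2)) ?_
    · exact hp_meas.comp ((measurable_fst.comp measurable_fst).prodMk
        ((measurable_pi_apply 0).comp (measurable_snd.comp measurable_fst)))
    · exact Measure.measurable_dirac.comp
        (measurable_snd.prodMk (hshift_meas.comp
          (((measurable_snd.comp measurable_fst).comp measurable_fst).prodMk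
            (measurable_snd.comp measurable_fst))))
  have hstep_meas : Measurable fun x' => (πdel x').bind fun a => K x' a :=
    PDL.measurable_step K πdel hK_prob hK_meas hπdel_prob hπdel_meas
  have hstep_prob : ∀ x', IsProbabilityMeasure ((πdel x').bind fun a => K x' a) := fun x' =>
    PDL.isProbabilityMeasure_step K πdel hK_prob hK_meas hπdel_prob hπdel_meas x'
  obtain ⟨μt, hμdef⟩ : ∃ μt : ℕ → Measure (S × (Fin (d' + 1) → A)),
      μt = stateDist K πdel (Measure.dirac x) := ⟨_, rfl⟩
  have hμ_prob : ∀ t, IsProbabilityMeasure (μt t) := by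
    rw [hμdef]
    exact fun t =>
      PDL.isProbabilityMeasure_stateDist K πdel hK_prob hK_meas hπdel_prob hπdel_meas _ t
  -- Q-value facts
  set MQ : ℝ := Mr + γ * MV with hMQdef
  have hMQ0 : 0 ≤ MQ := add_nonneg hMr0 (mul_nonneg hγ0 hMV0)
  have hQ_meas : Measurable fun q : S × A => qValue p πE r γ q.1 q.2 := by
    unfold qValue
    refine hr_meas.add (measurable_const.mul ?_)
    exact PDL.measurable_integral_param hp_meas (fun q => hp_prob q.1 q.2)
      (f := fun _ s' => V s') (hV_meas.comp measurable_snd)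
  have hQ_bdd : ∀ s a, |qValue p πE r γ s a| ≤ MQ := by
    intro s a
    unfold qValue
    haveI := hp_prob s a
    calc |r s a + γ * ∫ s', value p πE r γ s' ∂(p s a)|
        ≤ |r s a| + |γ * ∫ s', value p πE r γ s' ∂(p s a)| := abs_add_le _ _
      _ ≤ Mr + γ * MV := by
          refine add_le_add (hr_bdd s a) ?_
          rw [abs_mul, abs_of_nonneg hγ0]
          exact mul_le_mul_of_nonneg_left (PDL.abs_integral_le hV_bdd) hγ0
  -- delayed reward facts
  have hrt_meas : Measurable fun q : (S × (Fin (d' + 1) → A)) × A =>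
      delayedReward p r q.1 q.2 := by
    unfold delayedReward
    exact PDL.measurable_integral_param (m := fun q : (S × (Fin (d' + 1) → A)) × A =>
        beliefX p q.1)
      (hB_meas.comp measurable_fst) (fun q => hB_prob q.1)
      (f := fun q s => r s q.2)
      (hr_meas.comp (measurable_snd.prodMk (measurable_snd.comp measurable_fst)))
  have hrt_bdd : ∀ x' a, |delayedReward p r x' a| ≤ Mr := fun x' a => by
    haveI := hB_prob x'
    exact PDL.abs_integral_le (fun s => hr_bdd s a)
  obtain ⟨Rt, hRtdef⟩ : ∃ Rt : (S × (Fin (d' + 1) → A)) → ℝ,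
      Rt = fun x' => ∫ a, delayedReward p r x' a ∂(πdel x') := ⟨_, rfl⟩
  have hRt_meas : Measurable Rt := by
    rw [hRtdef]; exact PDL.measurable_integral_param hπdel_meas hπdel_prob hrt_meas
  have hRt_bdd : ∀ x', |Rt x'| ≤ Mr := fun x' => by
    rw [hRtdef]
    haveI := hπdel_prob x'
    exact PDL.abs_integral_le (fun a => hrt_bdd x' a)
  obtain ⟨N, hNdef⟩ : ∃ N : (S × (Fin (d' + 1) → A)) → ℝ,
      N = fun x' => ∫ x'', W x'' ∂((πdel x').bind fun a => K x' a) := ⟨_, rfl⟩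
  have hN_meas : Measurable N := by
    rw [hNdef]
    exact PDL.measurable_integral_param hstep_meas hstep_prob
      (f := fun _ x'' => W x'') (hW_meas.comp measurable_snd)
  have hN_bdd : ∀ x', |N x'| ≤ MV := fun x' => by
    rw [hNdef]
    haveI := hstep_prob x'
    exact PDL.abs_integral_le hW_bdd
  obtain ⟨QI, hQIdef⟩ : ∃ QI : (S × (Fin (d' + 1) → A)) → ℝ,
      QI = fun x' => ∫ s, ∫ a, qValue p πE r γ s a ∂(πdel x') ∂(beliefX p x') := ⟨_, rfl⟩
  have hVp_joint : Measurable fun q : S × A => ∫ s', V s' ∂(p q.1 q.2) :=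
    PDL.measurable_integral_param hp_meas (fun q => hp_prob q.1 q.2)
      (f := fun _ s' => V s') (hV_meas.comp measurable_snd)
  have hQI_meas : Measurable QI := by
    rw [hQIdef]
    refine PDL.measurable_integral_param hB_meas hB_prob
      (f := fun x' s => ∫ a, qValue p πE r γ s a ∂(πdel x')) ?_
    exact PDL.measurable_integral_param
      (m := fun w : (S × (Fin (d' + 1) → A)) × S => πdel w.1) (hπdel_meas.comp measurable_fst)
      (fun w => hπdel_prob w.1)
      (f := fun w a => qValue p πE r γ w.2 a)
      (hQ_meas.comp ((measurable_snd.comp measurable_fst).prodMk measurable_snd))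
  have hQI_bdd : ∀ x', |QI x'| ≤ MQ := fun x' => by
    rw [hQIdef]
    haveI := hB_prob x'
    refine PDL.abs_integral_le (fun s => ?_)
    haveI := hπdel_prob x'
    exact PDL.abs_integral_le (fun a => hQ_bdd s a)
  -- the one-step belief identity
  have hL4 : ∀ (x' : S × (Fin (d' + 1) → A)) (a : A),
      ∫ x'', W x'' ∂(K x' a) = ∫ s, ∫ s', V s' ∂(p s a) ∂(beliefX p x') := by
    intro x' a
    haveI := hp_prob x'.1 (x'.2 0)
    set tl : List A := List.ofFn (fun i : Fin d' => x'.2 i.succ) with htl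
    have hBrep : beliefX p x' = PDL.pfold p (p x'.1 (x'.2 0)) tl := by
      rw [show beliefX p x' = PDL.pfold p (Measure.dirac x'.1) (List.ofFn x'.2) from rfl]
      rw [List.ofFn_succ, PDL.pfold_cons,
        Measure.dirac_bind (f := fun s => p s (x'.2 0))
          (show Measurable fun s : S => p s (x'.2 0) from
            hp_meas.comp (measurable_id.prodMk measurable_const))]
    have hpf_meas : Measurable fun s₂ : S => PDL.pfold p (Measure.dirac s₂) (tl ++ [a]) :=
      PDL.measurable_pfold_dirac p hp_prob hp_meas _
    have hpf_prob : ∀ s₂ : S, IsProbabilityMeasure (PDL.pfold p (Measure.dirac s₂) (tl ++ [a])) :=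
      fun s₂ => PDL.isProbabilityMeasure_pfold p hp_prob hp_meas _ _
    calc ∫ x'', W x'' ∂(K x' a)
        = ∫ s₂, W (s₂, shiftQueue x'.2 a) ∂(p x'.1 (x'.2 0)) := by
          rw [hK_eq]
          exact integral_map (measurable_id.prodMk measurable_const).aemeasurable
            hW_meas.aestronglyMeasurable
      _ = ∫ s₂, ∫ s', V s' ∂(PDL.pfold p (Measure.dirac s₂) (tl ++ [a]))
            ∂(p x'.1 (x'.2 0)) := by
          refine integral_congr_ae (ae_of_all _ fun s₂ => ?_)
          simp only [hWdef]
          rw [show beliefX p (s₂, shiftQueue x'.2 a)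
              = PDL.pfold p (Measure.dirac s₂) (List.ofFn (shiftQueue x'.2 a)) from rfl,
            PDL.ofFn_shiftQueue]
      _ = ∫ s', V s'
            ∂((p x'.1 (x'.2 0)).bind fun s₂ => PDL.pfold p (Measure.dirac s₂) (tl ++ [a])) :=
          (PDL.integral_bind hpf_meas hpf_prob hV_meas hV_bdd).symm
      _ = ∫ s', V s' ∂(PDL.pfold p (p x'.1 (x'.2 0)) (tl ++ [a])) := by
          rw [← PDL.pfold_eq_bind p hp_prob hp_meas]
      _ = ∫ s', V s' ∂((PDL.pfold p (p x'.1 (x'.2 0)) tl).bind fun s => p s a) := by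
          rw [PDL.pfold_append]
      _ = ∫ s, ∫ s', V s' ∂(p s a) ∂(beliefX p x') := by
          rw [hBrep]
          haveI : IsProbabilityMeasure (PDL.pfold p (p x'.1 (x'.2 0)) tl) :=
            PDL.isProbabilityMeasure_pfold p hp_prob hp_meas _ _
          exact PDL.integral_bind
            (show Measurable fun s : S => p s a from
              hp_meas.comp (measurable_id.prodMk measurable_const))
            (fun s => hp_prob s a) hV_meas hV_bdd
  -- the key pointwise identity
  have hkey : ∀ x', QI x' = Rt x' + γ * N x' := by
    intro x'
    haveI := hB_prob x'
    haveI := hπdel_prob x'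
    have hinner : ∀ s : S, ∫ a, qValue p πE r γ s a ∂(πdel x')
        = (∫ a, r s a ∂(πdel x')) + γ * ∫ a, (∫ s', V s' ∂(p s a)) ∂(πdel x') := by
      intro s
      unfold qValue
      rw [integral_add ?_ ?_, integral_const_mul]
      · exact PDL.integrable_of_bdd
          ((hr_meas.comp (measurable_const.prodMk measurable_id)).aestronglyMeasurable)
          (fun a => hr_bdd s a)
      · refine Integrable.const_mul ?_ γ
        refine PDL.integrable_of_bdd ?_ (M := MV) (fun a => ?_)
        · exact (PDL.measurable_integral_param (m := fun a : A => p s a)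
            (hp_meas.comp (measurable_const.prodMk measurable_id)) (hp_prob s)
            (f := fun _ s' => V s') (hV_meas.comp measurable_snd)).aestronglyMeasurable
        · haveI := hp_prob s a; exact PDL.abs_integral_le hV_bdd
    have hsplit : QI x' = (∫ s, ∫ a, r s a ∂(πdel x') ∂(beliefX p x'))
        + γ * ∫ s, ∫ a, (∫ s', V s' ∂(p s a)) ∂(πdel x') ∂(beliefX p x') := by
      simp only [hQIdef]
      rw [integral_congr_ae (ae_of_all _ hinner)]
      rw [integral_add ?_ ?_, integral_const_mul]
      · exact PDL.integrable_of_bdd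
          ((PDL.measurable_integral_param (m := fun _ : S => πdel x') measurable_const
            (fun _ => hπdel_prob x') (f := fun s a => r s a) hr_meas).aestronglyMeasurable)
          (M := Mr) (fun s => PDL.abs_integral_le (fun a => hr_bdd s a))
      · refine Integrable.const_mul ?_ γ
        refine PDL.integrable_of_bdd ?_ (M := MV) (fun s => ?_)
        · exact (PDL.measurable_integral_param (m := fun _ : S => πdel x') measurable_const
            (fun _ => hπdel_prob x') (f := fun s a => ∫ s', V s' ∂(p s a))
            hVp_joint).aestronglyMeasurable
        · refine PDL.abs_integral_le (fun a => ?_)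
          haveI := hp_prob s a
          exact PDL.abs_integral_le hV_bdd
    have hswap1 : ∫ s, ∫ a, r s a ∂(πdel x') ∂(beliefX p x')
        = ∫ a, ∫ s, r s a ∂(beliefX p x') ∂(πdel x') :=
      integral_integral_swap (PDL.integrable_of_bdd hr_meas.aestronglyMeasurable
        (M := Mr) (fun q => hr_bdd q.1 q.2))
    have hswap2 : ∫ s, ∫ a, (∫ s', V s' ∂(p s a)) ∂(πdel x') ∂(beliefX p x')
        = ∫ a, ∫ s, (∫ s', V s' ∂(p s a)) ∂(beliefX p x') ∂(πdel x') :=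
      integral_integral_swap (PDL.integrable_of_bdd hVp_joint.aestronglyMeasurable
        (M := MV) (fun q => by haveI := hp_prob q.1 q.2; exact PDL.abs_integral_le hV_bdd))
    have hN' : N x' = ∫ a, ∫ x'', W x'' ∂(K x' a) ∂(πdel x') := by
      simp only [hNdef]
      exact PDL.integral_bind
        (show Measurable fun a : A => K x' a from
          hK_meas.comp (measurable_const.prodMk measurable_id))
        (hK_prob x') hW_meas hW_bdd
    have hfirst : ∫ a, ∫ s, r s a ∂(beliefX p x') ∂(πdel x') = Rt x' := by
      simp only [hRtdef]
      rfl
    have hsecond : ∫ a, ∫ s, (∫ s', V s' ∂(p s a)) ∂(beliefX p x') ∂(πdel x')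
        = ∫ a, ∫ x'', W x'' ∂(K x' a) ∂(πdel x') :=
      integral_congr_ae (ae_of_all _ fun a => (hL4 x' a).symm)
    rw [hsplit, hswap1, hswap2, hfirst, hsecond, ← hN']
  -- the visitation measure integral
  haveI hfin_sum : IsFiniteMeasure
      (Measure.sum fun t : ℕ => ENNReal.ofReal (γ ^ t) • μt t) := by
    constructor
    rw [Measure.sum_apply _ MeasurableSet.univ]
    have hco : ∀ t : ℕ, (ENNReal.ofReal (γ ^ t) • μt t) Set.univ = ENNReal.ofReal γ ^ t := by
      intro t
      haveI := hμ_prob t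
      simp [Measure.smul_apply, measure_univ, ENNReal.ofReal_pow hγ0]
    rw [tsum_congr hco, ENNReal.tsum_geometric]
    exact ENNReal.inv_lt_top.mpr (tsub_pos_of_lt (ENNReal.ofReal_lt_one.mpr hγ1))
  have hsum_int : Integrable (fun x' => W x' - QI x')
      (Measure.sum fun t : ℕ => ENNReal.ofReal (γ ^ t) • μt t) := by
    refine PDL.integrable_of_bdd (hW_meas.sub hQI_meas).aestronglyMeasurable
      (M := MV + MQ) (fun x' => ?_)
    exact (abs_sub _ _).trans (add_le_add (hW_bdd x') (hQI_bdd x'))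
  have hvis : ∫ x', (W x' - QI x') ∂(visitation K πdel γ x)
      = (1 - γ) * ∑' t, γ ^ t * ∫ x', (W x' - QI x') ∂(μt t) := by
    have hvisrep : visitation K πdel γ x = ENNReal.ofReal (1 - γ) •
        Measure.sum (fun t : ℕ => ENNReal.ofReal (γ ^ t) • μt t) := by
      rw [hμdef]; rfl
    rw [hvisrep]
    rw [integral_smul_measure, integral_sum_measure hsum_int,
      ENNReal.toReal_ofReal h1γ.le, smul_eq_mul]
    congr 1
    refine tsum_congr fun t => ?_
    rw [integral_smul_measure, ENNReal.toReal_ofReal (pow_nonneg hγ0 t), smul_eq_mul]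
  -- per-step decomposition
  have hWint : ∀ t, ∫ x'', W x'' ∂(μt (t + 1)) = ∫ x', N x' ∂(μt t) := by
    intro t
    haveI := hμ_prob t
    have hrec : μt (t + 1) = (μt t).bind fun x' => (πdel x').bind fun a => K x' a := by
      rw [hμdef]; rfl
    rw [hrec]
    calc ∫ x'', W x'' ∂((μt t).bind fun x' => (πdel x').bind fun a => K x' a)
        = ∫ x', (∫ x'', W x'' ∂((πdel x').bind fun a => K x' a)) ∂(μt t) :=
          PDL.integral_bind hstep_meas hstep_prob hW_meas hW_bdd
      _ = ∫ x', N x' ∂(μt t) := by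
          refine integral_congr_ae (ae_of_all _ fun x' => ?_)
          simp only [hNdef]
  have hct : ∀ t, ∫ x', (W x' - QI x') ∂(μt t)
      = (∫ x', W x' ∂(μt t)) - (∫ x', Rt x' ∂(μt t)) - γ * ∫ x'', W x'' ∂(μt (t + 1)) := by
    intro t
    haveI := hμ_prob t
    have h1 : Integrable W (μt t) := PDL.integrable_of_bdd hW_meas.aestronglyMeasurable hW_bdd
    have h2 : Integrable QI (μt t) := PDL.integrable_of_bdd hQI_meas.aestronglyMeasurable hQI_bdd
    have h3 : Integrable Rt (μt t) := PDL.integrable_of_bdd hRt_meas.aestronglyMeasurable hRt_bdd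
    have h4 : Integrable N (μt t) := PDL.integrable_of_bdd hN_meas.aestronglyMeasurable hN_bdd
    have hQeq : ∫ x', QI x' ∂(μt t) = ∫ x', (Rt x' + γ * N x') ∂(μt t) :=
      integral_congr_ae (ae_of_all _ fun x' => hkey x')
    rw [integral_sub h1 h2, hQeq, integral_add h3 (h4.const_mul γ), integral_const_mul,
      hWint t]
    ring
  -- the series
  obtain ⟨At, hAtdef⟩ : ∃ At : ℕ → ℝ, At = fun t => γ ^ t * ∫ x', W x' ∂(μt t) := ⟨_, rfl⟩
  obtain ⟨Bt, hBtdef⟩ : ∃ Bt : ℕ → ℝ, Bt = fun t => γ ^ t * ∫ x', Rt x' ∂(μt t) := ⟨_, rfl⟩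
  have hsummA : Summable At := by
    refine Summable.of_norm_bounded
      ((summable_geometric_of_lt_one hγ0 hγ1).mul_left MV) fun t => ?_
    haveI := hμ_prob t
    simp only [hAtdef]
    rw [Real.norm_eq_abs, abs_mul, abs_pow, abs_of_nonneg hγ0, mul_comm]
    exact mul_le_mul_of_nonneg_right (PDL.abs_integral_le hW_bdd) (pow_nonneg hγ0 t)
  have hsummB : Summable Bt := by
    refine Summable.of_norm_bounded
      ((summable_geometric_of_lt_one hγ0 hγ1).mul_left Mr) fun t => ?_
    haveI := hμ_prob t
    simp only [hBtdef]
    rw [Real.norm_eq_abs, abs_mul, abs_pow, abs_of_nonneg hγ0, mul_comm]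
    exact mul_le_mul_of_nonneg_right (PDL.abs_integral_le hRt_bdd) (pow_nonneg hγ0 t)
  have hsummA' : Summable fun t => At (t + 1) := (summable_nat_add_iff 1).mpr hsummA
  have hseries : ∑' t, γ ^ t * ∫ x', (W x' - QI x') ∂(μt t)
      = W x - value K πdel (delayedReward p r) γ x := by
    have hterm : ∀ t, γ ^ t * ∫ x', (W x' - QI x') ∂(μt t) = At t - Bt t - At (t + 1) := by
      intro t
      rw [hct t]
      simp only [hAtdef, hBtdef, pow_succ]
      ring
    rw [tsum_congr hterm, Summable.tsum_sub (hsummA.sub hsummB) hsummA', Summable.tsum_sub hsummA hsummB]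
    have h0 : ∑' t, At (t + 1) = (∑' t, At t) - At 0 := by
      have := Summable.tsum_eq_zero_add hsummA
      linarith
    rw [h0]
    have hA0 : At 0 = W x := by
      have hμ0 : μt 0 = Measure.dirac x := by rw [hμdef]; rfl
      simp only [hAtdef, pow_zero, one_mul, hμ0]
      exact integral_dirac' _ _ hW_meas.stronglyMeasurable
    have hBsum : ∑' t, Bt t = value K πdel (delayedReward p r) γ x := by
      simp only [hBtdef, hRtdef, hμdef]
      rfl
    rw [hA0, hBsum]
    ring
  have final : W x - value K πdel (delayedReward p r) γ x
      = (1 / (1 - γ)) * ∫ x', (W x' - QI x') ∂(visitation K πdel γ x) := by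
    rw [hvis, hseries]
    field_simp
  simpa only [hWdef, hQIdef, hKdef, hVdef] using final
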